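/- Let E be an ultrametric Banach space over a complete ultrametric field K, U ⊆ E open, f : U → E analytic, and p ∈ U a fixed point of f such that α := f'(p) is a bicontinuous linear automorphism of E. Then the following are equivalent: (a) E admits a centre subspace (with a = 1) with respect to α, and each neighbourhood P of p in U contains a neighbourhood Q of p such that f(Q) = Q; (b) there exists an ultrametric norm on E defining its topology which makes α an isometry (‖α(x)‖ = ‖x‖ for all x ∈ E). -/

import Mathlib

open Filter Topology

/-- `N` is an ultrametric norm on the `K`-vector space `E`. -/
def IsUltraNorm (K : Type*) [NormedField K] {E : Type*} [AddCommGroup E] [Module K E]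
    (N : E → ℝ) : Prop :=
  (∀ x : E, 0 ≤ N x) ∧ (∀ x : E, N x = 0 ↔ x = 0) ∧
    (∀ (c : K) (x : E), N (c • x) = ‖c‖ * N x) ∧
    ∀ x y : E, N (x + y) ≤ max (N x) (N y)

/-- The norm `N` defines the canonical topology of `E`, i.e. it is equivalent
to the ambient norm. -/
def DefinesTopology {E : Type*} [NormedAddCommGroup E] (N : E → ℝ) : Prop :=
  ∃ c > 0, ∃ C > 0, ∀ x : E, c * ‖x‖ ≤ N x ∧ N x ≤ C * ‖x‖

lemma quad_est {K : Type*} [NontriviallyNormedField K] [CompleteSpace K]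
    {E : Type*} [NormedAddCommGroup E] [NormedSpace K E] [CompleteSpace E]
    {U : Set E} (hU : IsOpen U) {f : E → E} (hf : AnalyticOnNhd K f U)
    {p : E} (hp : p ∈ U)
    (α : E ≃L[K] E) (hα : HasFDerivAt f (α : E →L[K] E) p) :
    ∃ ρ > 0, Metric.ball p ρ ⊆ U ∧ ∃ C > 0, ∀ y ∈ Metric.ball p ρ, ∀ z ∈ Metric.ball p ρ,
      ‖f y - f z - α (y - z)‖ ≤ C * max ‖y - p‖ ‖z - p‖ * ‖y - z‖ := by
  obtain ⟨q, hq⟩ := hf p hp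
  obtain ⟨r, hball⟩ := hq
  obtain ⟨r', hr'0, hr'⟩ := ENNReal.lt_iff_exists_nnreal_btwn.1 hball.r_pos
  obtain ⟨C, hC⟩ := hball.image_sub_sub_deriv_le hr'
  obtain ⟨ε, hε0, hεU⟩ := Metric.isOpen_iff.1 hU p hp
  have hder : continuousMultilinearCurryFin1 K E E (q 1) = (α : E →L[K] E) :=
    hball.hasFPowerSeriesAt.hasFDerivAt.unique hα
  have happ : ∀ v : E, (q 1 fun _ => v) = α v := by
    intro v
    have := congrArg (fun L : E →L[K] E => L v) hder
    simpa [Matrix.vec_single_eq_const] using this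
  refine ⟨min (r' : ℝ) ε, lt_min (by exact_mod_cast ENNReal.coe_pos.1 hr'0) hε0, ?_, max C 1, lt_of_lt_of_le one_pos (le_max_right _ _),
    ?_⟩
  · exact fun x hx => hεU (Metric.ball_subset_ball (min_le_right _ _) hx)
  · intro y hy z hz
    have hy' : y ∈ Metric.eball p r' := by
      rw [Metric.emetric_ball_nnreal]
      exact Metric.ball_subset_ball (min_le_left _ _) hy
    have hz' : z ∈ Metric.eball p r' := by
      rw [Metric.emetric_ball_nnreal]
      exact Metric.ball_subset_ball (min_le_left _ _) hz
    have := hC y hy' z hz'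
    rw [happ] at this
    refine this.trans ?_
    have h1 : (0:ℝ) ≤ max ‖y - p‖ ‖z - p‖ := le_max_of_le_left (norm_nonneg _)
    gcongr
    exact le_max_left _ _

section UltraLemmas
variable {K : Type*} [NormedField K] {E : Type*} [AddCommGroup E] [Module K E]
  {N : E → ℝ}

lemma IsUltraNorm.zero (hN : IsUltraNorm K N) : N 0 = 0 := (hN.2.1 0).mpr rfl

lemma IsUltraNorm.neg (hN : IsUltraNorm K N) (x : E) : N (-x) = N x := by
  have := hN.2.2.1 (-1 : K) x
  simpa using this

lemma IsUltraNorm.sub_le (hN : IsUltraNorm K N) (x y : E) : N (x - y) ≤ max (N x) (N y) := by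
  rw [sub_eq_add_neg]
  simpa [hN.neg] using hN.2.2.2 x (-y)

/-- isoceles: if `N y < N x` then `N (x + y) = N x`. -/
lemma IsUltraNorm.add_eq_left (hN : IsUltraNorm K N) {x y : E} (h : N y < N x) : N (x + y) = N x := by
  refine le_antisymm ((hN.2.2.2 x y).trans (by simp [h.le])) ?_
  have h2 : N x ≤ max (N (x + y)) (N y) := by
    have := hN.sub_le (x + y) y
    simpa using this
  rcases max_cases (N (x + y)) (N y) with ⟨he, _⟩ | ⟨he, _⟩
  · rw [he] at h2; exact h2
  · rw [he] at h2; exact absurd (h2.trans_lt h) (lt_irrefl _)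

lemma IsUltraNorm.pos (hN : IsUltraNorm K N) {x : E} (hx : x ≠ 0) : 0 < N x :=
  (hN.1 x).lt_of_ne (fun h => hx ((hN.2.1 x).mp h.symm))

end UltraLemmas

lemma uniq_decomp {K : Type*} [NormedField K] {E : Type*} [AddCommGroup E] [Module K E]
    {Es Ec Eu : Submodule K E} (h1 : Disjoint Es (Ec ⊔ Eu)) (h2 : Disjoint Ec Eu)
    {s s' c c' u u' : E} (hs : s ∈ Es) (hs' : s' ∈ Es) (hc : c ∈ Ec) (hc' : c' ∈ Ec)
    (hu : u ∈ Eu) (hu' : u' ∈ Eu) (heq : s + c + u = s' + c' + u') :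
    s = s' ∧ c = c' ∧ u = u' := by
  have h3 : s - s' = (c' - c) + (u' - u) := by
    have h := heq
    rw [← sub_eq_zero] at h ⊢
    rw [← h]
    abel
  have hmem : s - s' ∈ Ec ⊔ Eu :=
    Submodule.mem_sup.2 ⟨c' - c, sub_mem hc' hc, u' - u, sub_mem hu' hu, h3.symm⟩
  have hss : s = s' := by
    have := Submodule.disjoint_def.mp h1 _ (sub_mem hs hs') hmem
    rwa [sub_eq_zero] at this
  subst hss
  have h4 : c - c' = u' - u := by
    have h := heq
    rw [← sub_eq_zero] at h ⊢
    rw [← h]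
    abel
  have hcc : c = c' := by
    have := Submodule.disjoint_def.mp h2 _ (sub_mem hc hc') (h4 ▸ sub_mem hu' hu)
    rwa [sub_eq_zero] at this
  subst hcc
  refine ⟨rfl, rfl, ?_⟩
  have h5 : u - u' = 0 := by
    rw [← sub_eq_zero] at heq
    rw [← heq]
    abel
  rwa [sub_eq_zero] at h5

set_option maxHeartbeats 2000000 in
theorem stable_nbhds
    {K : Type*} [NontriviallyNormedField K] [CompleteSpace K]
    {E : Type*} [NormedAddCommGroup E] [NormedSpace K E] [CompleteSpace E]
    {U : Set E} (hU : IsOpen U) {f : E → E} (hf : AnalyticOnNhd K f U)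
    {p : E} (hp : p ∈ U) (hfp : f p = p)
    (α : E ≃L[K] E) (hα : HasFDerivAt f (α : E →L[K] E) p)
    {N : E → ℝ} (hN : IsUltraNorm K N)
    {cn : ℝ} (hcn : 0 < cn) {Cn : ℝ} (hCn : 0 < Cn)
    (hNtop : ∀ x : E, cn * ‖x‖ ≤ N x ∧ N x ≤ Cn * ‖x‖)
    (hNiso : ∀ x : E, N (α x) = N x) :
    ∀ P, P ⊆ U → P ∈ 𝓝 p → ∃ Q, Q ⊆ P ∧ Q ∈ 𝓝 p ∧ f '' Q = Q := by
  have hNiso' : ∀ x : E, N (α.symm x) = N x := fun x => by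
    conv_rhs => rw [← α.apply_symm_apply x]
    exact (hNiso _).symm
  -- continuity of N
  have hNlip : ∀ a b : E, dist (N a) (N b) ≤ Cn * dist a b := by
    intro a b
    have key : ∀ u v : E, N u - N v ≤ Cn * ‖u - v‖ := by
      intro u v
      have h1 : N u ≤ max (N v) (N (u - v)) := by
        have := hN.2.2.2 v (u - v)
        simpa using this
      have h2 : N (u - v) ≤ Cn * ‖u - v‖ := (hNtop _).2
      have h3 : N u ≤ N v + Cn * ‖u - v‖ := by
        rcases max_cases (N v) (N (u - v)) with ⟨he, _⟩ | ⟨he, _⟩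
        · rw [he] at h1; nlinarith [norm_nonneg (u - v)]
        · rw [he] at h1; nlinarith [hN.1 v]
      linarith
    rw [Real.dist_eq, dist_eq_norm, abs_sub_le_iff]
    constructor
    · exact key a b
    · have := key b a
      rwa [show b - a = -(a-b) by abel, norm_neg] at this
  have hNcont : Continuous N := by
    have : LipschitzWith (Real.toNNReal Cn) N := LipschitzWith.of_dist_le_mul (fun a b => by
      rw [Real.coe_toNNReal Cn hCn.le]; exact hNlip a b)
    exact this.continuous
  obtain ⟨ρ, hρ0, hρU, C₀, hC₀, hquad⟩ := quad_est hU hf hp α hα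
  intro P hPU hPnhds
  obtain ⟨ε, hε0, hεP⟩ := Metric.mem_nhds_iff.1 hPnhds
  set θ := min (1/2 : ℝ) (cn / (2 * Cn)) with hθdef
  have hθ0 : 0 < θ := lt_min (by norm_num) (by positivity)
  have hθhalf : θ ≤ 1/2 := min_le_left _ _
  have hθ2 : θ ≤ cn / (2 * Cn) := min_le_right _ _
  set r := min (min (cn * ε / 2) (cn * ρ / 2)) (θ * cn * cn / (Cn * C₀)) with hrdef
  have hr0 : 0 < r := lt_min (lt_min (by positivity) (by positivity)) (by positivity)
  set Q := {x : E | N (x - p) ≤ r} with hQdef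
  have hpQ : p ∈ Q := by simp [hQdef, hN.zero, hr0.le]
  have hQnorm : ∀ x ∈ Q, ‖x - p‖ ≤ r / cn := by
    intro x hx
    have h1 : cn * ‖x - p‖ ≤ r := le_trans (hNtop (x - p)).1 hx
    rw [le_div_iff₀ hcn]; linarith
  have hQρ : Q ⊆ Metric.ball p ρ := by
    intro x hx
    have := hQnorm x hx
    have h2 : r / cn < ρ := by
      have : r ≤ cn * ρ / 2 := le_trans (min_le_left _ _) (min_le_right _ _)
      rw [div_lt_iff₀ hcn]; nlinarith
    rw [Metric.mem_ball, dist_eq_norm]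
    exact lt_of_le_of_lt this h2
  have hQP : Q ⊆ P := by
    intro x hx
    apply hεP
    rw [Metric.mem_ball, dist_eq_norm]
    have h2 : r / cn < ε := by
      have : r ≤ cn * ε / 2 := le_trans (min_le_left _ _) (min_le_left _ _)
      rw [div_lt_iff₀ hcn]; nlinarith
    exact lt_of_le_of_lt (hQnorm x hx) h2
  -- the key remainder estimate, in the norm N
  have hrem : ∀ x ∈ Q, ∀ x' ∈ Q, N (f x - f x' - α (x - x')) ≤ θ * N (x - x') := by
    intro x hx x' hx'
    have h1 := hquad x (hQρ hx) x' (hQρ hx')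
    have h2 : N (f x - f x' - α (x - x')) ≤ Cn * ‖f x - f x' - α (x - x')‖ := (hNtop _).2
    have h3 : max ‖x - p‖ ‖x' - p‖ ≤ r / cn := max_le (hQnorm x hx) (hQnorm x' hx')
    have h4 : ‖x - x'‖ ≤ N (x - x') / cn := by
      rw [le_div_iff₀ hcn]; linarith [(hNtop (x - x')).1]
    have h5 : r ≤ θ * cn * cn / (Cn * C₀) := min_le_right _ _
    have h6 : r * (Cn * C₀) ≤ θ * cn * cn := by
      rwa [le_div_iff₀ (by positivity : (0:ℝ) < Cn * C₀)] at h5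
    have hCC : (Cn * C₀ * r) / (cn * cn) ≤ θ := by
      rw [div_le_iff₀ (by positivity : (0:ℝ) < cn * cn)]; nlinarith
    have hNxx : 0 ≤ N (x - x') := hN.1 _
    have hmax0 : (0:ℝ) ≤ max ‖x - p‖ ‖x' - p‖ := le_max_of_le_left (norm_nonneg _)
    have hr' : (0:ℝ) ≤ r / cn := by positivity
    calc N (f x - f x' - α (x - x')) ≤ Cn * (C₀ * max ‖x - p‖ ‖x' - p‖ * ‖x - x'‖) := by
          nlinarith [norm_nonneg (f x - f x' - α (x - x')), norm_nonneg (x - x')]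
      _ ≤ Cn * (C₀ * (r / cn) * (N (x - x') / cn)) := by gcongr
      _ = (Cn * C₀ * r) / (cn * cn) * N (x - x') := by field_simp
      _ ≤ θ * N (x - x') := by nlinarith
  -- forward inclusion
  have hfwd : ∀ x ∈ Q, f x ∈ Q := by
    intro x hx
    have hdecomp : f x - p = α (x - p) + (f x - f p - α (x - p)) := by rw [hfp]; abel
    have h1 : N (f x - f p - α (x - p)) ≤ θ * N (x - p) := by
      have := hrem x hx p hpQ; simpa using this
    have h2 : N (f x - p) ≤ max (N (α (x - p))) (N (f x - f p - α (x - p))) := by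
      rw [hdecomp]; exact hN.2.2.2 _ _
    rw [hNiso] at h2
    have hxp : N (x - p) ≤ r := hx
    have h0 : 0 ≤ N (x - p) := hN.1 _
    show N (f x - p) ≤ r
    rcases max_cases (N (x - p)) (N (f x - f p - α (x - p))) with ⟨he, _⟩ | ⟨he, _⟩ <;>
      rw [he] at h2 <;> nlinarith
  -- backward: every y ∈ Q has a preimage in Q, via Banach fixed point
  have hbwd : ∀ y ∈ Q, ∃ x ∈ Q, f x = y := by
    intro y hy
    set g := fun x : E => x + α.symm (y - f x) with hgdef
    have hgkey : ∀ x : E, α (g x - p) = (y - p) - (f x - f p - α (x - p)) := by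
      intro x
      rw [hfp]
      simp only [hgdef, map_sub, map_add, α.apply_symm_apply]
      abel
    have hgQ : Set.MapsTo g Q Q := by
      intro x hx
      have h1 : N (g x - p) = N ((y - p) - (f x - f p - α (x - p))) := by
        rw [← hNiso (g x - p), hgkey x]
      have h2 : N (f x - f p - α (x - p)) ≤ θ * N (x - p) := by
        have := hrem x hx p hpQ; simpa using this
      have h3 := hN.sub_le (y - p) (f x - f p - α (x - p))
      have hxp : N (x - p) ≤ r := hx
      have hyp : N (y - p) ≤ r := hy
      have h0 : 0 ≤ N (x - p) := hN.1 _
      show N (g x - p) ≤ r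
      rw [h1]
      rcases max_cases (N (y - p)) (N (f x - f p - α (x - p))) with ⟨he, _⟩ | ⟨he, _⟩ <;>
        rw [he] at h3 <;> nlinarith
    have hgcontr : ∀ x ∈ Q, ∀ x' ∈ Q, dist (g x) (g x') ≤ (1/2) * dist x x' := by
      intro x hx x' hx'
      have hkey2 : α (g x - g x') = -(f x - f x' - α (x - x')) := by
        simp only [hgdef, map_sub, map_add, α.apply_symm_apply]
        abel
      have h1 : N (g x - g x') = N (f x - f x' - α (x - x')) := by
        rw [← hNiso (g x - g x'), hkey2, hN.neg]
      have h2 := hrem x hx x' hx'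
      have h3 : cn * ‖g x - g x'‖ ≤ N (g x - g x') := (hNtop _).1
      have h4 : N (x - x') ≤ Cn * ‖x - x'‖ := (hNtop _).2
      rw [dist_eq_norm, dist_eq_norm]
      have hθ2' : θ * (2 * Cn) ≤ cn := by
        rwa [le_div_iff₀ (by positivity : (0:ℝ) < 2 * Cn)] at hθ2
      nlinarith [norm_nonneg (x - x'), norm_nonneg (g x - g x'), hN.1 (x - x')]
    have hQclosed : IsClosed Q := by
      have : Q = (fun x => N (x - p)) ⁻¹' Set.Iic r := rfl
      rw [this]
      exact IsClosed.preimage (hNcont.comp (continuous_id.sub continuous_const)) isClosed_Iic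
    obtain ⟨x, hxQ, hxfix, -, -⟩ := ContractingWith.exists_fixedPoint'
      (K := (1/2 : NNReal)) hQclosed.isComplete hgQ
      ⟨by rw [← NNReal.coe_lt_coe]; norm_num,
        LipschitzWith.of_dist_le_mul (fun a b => by
        rw [Subtype.dist_eq, Set.MapsTo.val_restrict_apply, Set.MapsTo.val_restrict_apply,
          Subtype.dist_eq]
        have h := hgcontr a a.2 b b.2
        have hc : ((1/2 : NNReal) : ℝ) = 1/2 := by norm_num
        rw [hc]
        exact h)⟩ hpQ (edist_ne_top _ _)
    refine ⟨x, hxQ, ?_⟩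
    have hx0 : α.symm (y - f x) = 0 := by
      have h := hxfix
      simp only [Function.IsFixedPt, hgdef] at h
      exact add_eq_left.mp h
    have hyf : y - f x = 0 := by
      have := congrArg α hx0
      simpa using this
    exact (sub_eq_zero.mp hyf).symm
  -- assemble
  refine ⟨Q, hQP, ?_, ?_⟩
  · rw [Metric.mem_nhds_iff]
    refine ⟨r / Cn, by positivity, fun x hx => ?_⟩
    rw [Metric.mem_ball, dist_eq_norm] at hx
    show N (x - p) ≤ r
    have := (hNtop (x - p)).2
    have : N (x - p) ≤ Cn * (r / Cn) := by nlinarith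
    rwa [mul_div_cancel₀ _ (ne_of_gt hCn)] at this
  · apply Set.Subset.antisymm
    · rintro _ ⟨x, hx, rfl⟩
      exact hfwd x hx
    · intro y hy
      obtain ⟨x, hxQ, hxfy⟩ := hbwd y hy
      exact ⟨x, hxQ, hxfy⟩

set_option maxHeartbeats 4000000 in
theorem trivial_hyperbolic
    {K : Type*} [NontriviallyNormedField K] [CompleteSpace K]
    {E : Type*} [NormedAddCommGroup E] [NormedSpace K E] [CompleteSpace E]
    {U : Set E} (hU : IsOpen U) {f : E → E} (hf : AnalyticOnNhd K f U)
    {p : E} (hp : p ∈ U) (hfp : f p = p)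
    (α : E ≃L[K] E) (hα : HasFDerivAt f (α : E →L[K] E) p)
    {Es Ec Eu : Submodule K E} {N : E → ℝ}
    (hEs : ∀ x ∈ Es, α x ∈ Es) (hEc : ∀ x ∈ Ec, α x ∈ Ec) (hEu : ∀ x ∈ Eu, α x ∈ Eu)
    (hdisj1 : Disjoint Es (Ec ⊔ Eu)) (hdisj2 : Disjoint Ec Eu)
    (hsup : Es ⊔ Ec ⊔ Eu = ⊤)
    (hN : IsUltraNorm K N)
    {cn : ℝ} (hcn : 0 < cn) {Cn : ℝ} (hCn : 0 < Cn)
    (hNtop : ∀ x : E, cn * ‖x‖ ≤ N x ∧ N x ≤ Cn * ‖x‖)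
    (hmax : ∀ x ∈ Es, ∀ y ∈ Ec, ∀ z ∈ Eu, N (x + y + z) = max (N x) (max (N y) (N z)))
    (hiso : ∀ y ∈ Ec, N (α y) = N y)
    {b : ℝ} (hb : b < 1) (hbs : ∀ x ∈ Es, N (α x) ≤ b * N x)
    {B : ℝ} (hB : 1 < B) (hBu : ∀ z ∈ Eu, B * N z ≤ N (α z))
    (hstab : ∀ P, P ⊆ U → P ∈ 𝓝 p → ∃ Q, Q ⊆ P ∧ Q ∈ 𝓝 p ∧ f '' Q = Q) :
    Es = ⊥ ∧ Eu = ⊥ := by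
  obtain ⟨ρ, hρ0, hρU, C₀, hC₀, hquad⟩ := quad_est hU hf hp α hα
  set b' := max b 0 with hb'def
  have hb'0 : 0 ≤ b' := le_max_right _ _
  have hb'1 : b' < 1 := max_lt hb one_pos
  have hbs' : ∀ x ∈ Es, N (α x) ≤ b' * N x := fun x hx =>
    (hbs x hx).trans (mul_le_mul_of_nonneg_right (le_max_left _ _) (hN.1 x))
  set C₂ := Cn * C₀ / (cn * cn) with hC₂def
  have hC₂0 : 0 < C₂ := by positivity
  set r := min (cn * ρ / 2) (1 / (2 * C₂)) with hrdef
  have hr0 : 0 < r := lt_min (by positivity) (by positivity)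
  have hrC₂ : C₂ * r ≤ 1 / 2 := by
    have : r ≤ 1 / (2 * C₂) := min_le_right _ _
    rw [le_div_iff₀ (by positivity)] at this
    linarith
  -- the pointwise quadratic remainder estimate in the norm N
  have hrnorm : ∀ x : E, N (x - p) ≤ r → ‖x - p‖ < ρ := by
    intro x hx
    have h1 : cn * ‖x - p‖ ≤ r := le_trans (hNtop (x - p)).1 hx
    have h2 : r ≤ cn * ρ / 2 := min_le_left _ _
    nlinarith
  have hR : ∀ x : E, N (x - p) ≤ r →
      N (f x - p - α (x - p)) ≤ C₂ * N (x - p) * N (x - p) := by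
    intro x hx
    have hxball : x ∈ Metric.ball p ρ := by
      rw [Metric.mem_ball, dist_eq_norm]; exact hrnorm x hx
    have hpball : p ∈ Metric.ball p ρ := Metric.mem_ball_self hρ0
    have h1 := hquad x hxball p hpball
    rw [sub_self, norm_zero, hfp] at h1
    have hmx : max ‖x - p‖ (0:ℝ) = ‖x - p‖ := max_eq_left (norm_nonneg _)
    rw [hmx] at h1
    have h2 : N (f x - p - α (x - p)) ≤ Cn * ‖f x - p - α (x - p)‖ := (hNtop _).2
    have h3 : ‖x - p‖ ≤ N (x - p) / cn := by
      rw [le_div_iff₀ hcn]; linarith [(hNtop (x - p)).1]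
    have h4 : 0 ≤ N (x - p) := hN.1 _
    calc N (f x - p - α (x - p)) ≤ Cn * (C₀ * ‖x - p‖ * ‖x - p‖) := by
          nlinarith [norm_nonneg (f x - p - α (x - p)), norm_nonneg (x - p)]
      _ ≤ Cn * (C₀ * (N (x - p) / cn) * (N (x - p) / cn)) := by
          have h5 := mul_le_mul_of_nonneg_left (mul_self_le_mul_self (norm_nonneg (x - p)) h3)
            (by positivity : (0:ℝ) ≤ Cn * C₀)
          nlinarith [h5]
      _ = C₂ * N (x - p) * N (x - p) := by rw [hC₂def]; field_simp
  -- the invariant neighbourhood Q inside the N-ball of radius r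
  set P := {x : E | N (x - p) ≤ r} with hPdef
  have hPU : P ⊆ U := by
    intro x hx
    exact hρU (by rw [Metric.mem_ball, dist_eq_norm]; exact hrnorm x hx)
  have hPnhds : P ∈ 𝓝 p := by
    rw [Metric.mem_nhds_iff]
    refine ⟨r / Cn, by positivity, fun x hx => ?_⟩
    rw [Metric.mem_ball, dist_eq_norm] at hx
    show N (x - p) ≤ r
    have h1 := (hNtop (x - p)).2
    have : N (x - p) ≤ Cn * (r / Cn) := by nlinarith
    rwa [mul_div_cancel₀ _ (ne_of_gt hCn)] at this
  obtain ⟨Q, hQP, hQnhds, hQf⟩ := hstab P hPU hPnhds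
  obtain ⟨δ, hδ0, hδQ⟩ := Metric.mem_nhds_iff.1 hQnhds
  have hQr : ∀ x ∈ Q, N (x - p) ≤ r := fun x hx => hQP hx
  -- decomposition of an arbitrary vector
  have hdecomp : ∀ v : E, ∃ vs ∈ Es, ∃ vc ∈ Ec, ∃ vu ∈ Eu, v = vs + vc + vu := by
    intro v
    have hv : v ∈ Es ⊔ Ec ⊔ Eu := by rw [hsup]; trivial
    obtain ⟨a, ha, vu, hvu, hav⟩ := Submodule.mem_sup.1 hv
    obtain ⟨vs, hvs, vc, hvc, hac⟩ := Submodule.mem_sup.1 ha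
    exact ⟨vs, hvs, vc, hvc, vu, hvu, by rw [← hav, ← hac]⟩
  -- scaling small vectors into the δ-ball
  have hscale : ∀ v : E, v ≠ 0 → ∃ w : E, w ≠ 0 ∧ ‖w‖ < δ ∧ ∃ k : K, w = k • v := by
    intro v hv
    have hv0 : 0 < ‖v‖ := norm_pos_iff.2 hv
    obtain ⟨k, hk0, hk⟩ := NormedField.exists_norm_lt K (show (0:ℝ) < δ / ‖v‖ by positivity)
    refine ⟨k • v, ?_, ?_, k, rfl⟩
    · exact smul_ne_zero (norm_pos_iff.1 hk0) hv
    · rw [norm_smul]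
      rw [lt_div_iff₀ hv0] at hk
      exact hk
  constructor
  -- **Es = ⊥** : backward orbits of stable points blow up
  · rw [Submodule.eq_bot_iff]
    intro s₀ hs₀
    by_contra hs₀ne
    obtain ⟨s, hsne, hsδ, k, rfl⟩ := hscale s₀ hs₀ne
    set s := k • s₀ with hsdef
    have hsEs : s ∈ Es := Submodule.smul_mem _ _ hs₀
    have hNs : 0 < N s := hN.pos hsne
    set κ := max b' (C₂ * r) with hκdef
    have hκ0 : 0 < κ := lt_of_lt_of_le (by positivity) (le_max_right _ _)
    have hκ1 : κ < 1 := max_lt hb'1 (lt_of_le_of_lt hrC₂ (by norm_num))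
    -- backward orbit
    have hpre : ∀ q : E, q ∈ Q → ∃ q', q' ∈ Q ∧ f q' = q := by
      intro q hq
      rw [← hQf] at hq
      obtain ⟨q', h1, h2⟩ := hq
      exact ⟨q', h1, h2⟩
    choose g hgQ hgf using hpre
    have hx₀ : p + s ∈ Q := by
      apply hδQ
      rw [Metric.mem_ball, dist_eq_norm]
      simpa using hsδ
    obtain ⟨X, hX0, hXQ, hXf⟩ : ∃ X : ℕ → E, X 0 = p + s ∧ (∀ n, X n ∈ Q) ∧
        ∀ n, f (X (n + 1)) = X n := by
      let Y : ℕ → {z : E // z ∈ Q} := fun n =>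
        Nat.rec (motive := fun _ => {z : E // z ∈ Q}) ⟨p + s, hx₀⟩
          (fun _ w => ⟨g w.1 w.2, hgQ w.1 w.2⟩) n
      exact ⟨fun n => (Y n).1, rfl, fun n => (Y n).2, fun n => hgf _ _⟩
    -- invariant
    have hinv : ∀ n : ℕ, ∃ vs ∈ Es, ∃ vc ∈ Ec, ∃ vu ∈ Eu,
        X n - p = vs + vc + vu ∧ N vc ≤ κ * N vs ∧ N vu ≤ κ * N vs ∧
        N s ≤ κ ^ n * N vs := by
      intro n
      induction n with
      | zero =>
        refine ⟨s, hsEs, 0, zero_mem _, 0, zero_mem _, ?_, ?_, ?_, ?_⟩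
        · rw [hX0]; abel
        · rw [hN.zero]; positivity
        · rw [hN.zero]; positivity
        · simp
      | succ n ih =>
        obtain ⟨ws, hws, wc, hwc, wu, hwu, hwdec, hwc2, hwu2, hwn⟩ := ih
        set z := X (n + 1) with hzdef
        set v := z - p with hvdef
        have hvr : N v ≤ r := hQr z (by rw [hzdef]; exact hXQ (n + 1))
        obtain ⟨vs, hvs, vc, hvc, vu, hvu, hvdec⟩ := hdecomp v
        set R := f z - p - α v with hRdef
        have hRbound : N R ≤ C₂ * N v * N v := hR z hvr
        obtain ⟨Rs, hRs, Rc, hRc, Ru, hRu, hRdec⟩ := hdecomp R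
        have hRcomp : N Rs ≤ N R ∧ N Rc ≤ N R ∧ N Ru ≤ N R := by
          have := hmax Rs hRs Rc hRc Ru hRu
          rw [← hRdec] at this
          exact ⟨by rw [this]; exact le_max_left _ _,
            by rw [this]; exact le_max_of_le_right (le_max_left _ _),
            by rw [this]; exact le_max_of_le_right (le_max_right _ _)⟩
        -- the two decompositions of w := X n - p agree
        have hw : X n - p = (α vs + Rs) + (α vc + Rc) + (α vu + Ru) := by
          have h1 : X n - p = α v + R := by
            rw [hRdef, ← hXf n, ← hzdef]
            abel
          rw [h1, hvdec, hRdec]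
          simp only [map_add]
          abel
        have huniq := uniq_decomp hdisj1 hdisj2 hws
          (add_mem (hEs vs hvs) hRs) hwc (add_mem (hEc vc hvc) hRc) hwu
          (add_mem (hEu vu hvu) hRu) (hwdec.symm.trans hw)
        obtain ⟨hws_eq, hwc_eq, hwu_eq⟩ := huniq
        -- basic quantities
        set t := N v with htdef
        have ht_max : t = max (N vs) (max (N vc) (N vu)) := by
          rw [htdef, hvdec]; exact hmax vs hvs vc hvc vu hvu
        have hvs_le : N vs ≤ t := by rw [ht_max]; exact le_max_left _ _
        have hvc_le : N vc ≤ t := by rw [ht_max]; exact le_max_of_le_right (le_max_left _ _)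
        have hvu_le : N vu ≤ t := by rw [ht_max]; exact le_max_of_le_right (le_max_right _ _)
        have hκn : (0:ℝ) < κ ^ n := by positivity
        have hNws : 0 < N ws := by nlinarith [hN.1 ws]
        have ht0 : 0 < t := by
          rcases lt_or_eq_of_le (hN.1 v) with h | h
          · exact h
          · exfalso
            have hv0 : v = 0 := (hN.2.1 v).mp h.symm
            have hz : z = p := by rwa [hvdef, sub_eq_zero] at hv0
            have : X n - p = 0 := by
              rw [← hXf n, ← hzdef, hz, hfp]; abel
            rw [hwdec] at this
            have h2 := hmax ws hws wc hwc wu hwu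
            rw [this, hN.zero] at h2
            have h6 : N ws ≤ max (N ws) (max (N wc) (N wu)) := le_max_left _ _
            rw [← h2] at h6
            linarith
        have hRv : N R ≤ C₂ * r * t := by
          have h9 := mul_le_mul_of_nonneg_right
            (mul_le_mul_of_nonneg_left hvr hC₂0.le) ht0.le
          linarith
        have hC₂κ : C₂ * r ≤ κ := le_max_right _ _
        -- N ws ≤ κ * t
        have hws_bound : N ws ≤ κ * t := by
          rw [hws_eq]
          have h1 : N (α vs + Rs) ≤ max (N (α vs)) (N Rs) := hN.2.2.2 _ _
          have h2 : N (α vs) ≤ b' * N vs := hbs' vs hvs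
          have h3 : b' * N vs ≤ κ * t := by
            have : b' ≤ κ := le_max_left _ _
            nlinarith [hN.1 vs]
          have h4 : N Rs ≤ κ * t := le_trans hRcomp.1 (le_trans hRv (by nlinarith))
          rcases max_cases (N (α vs)) (N Rs) with ⟨he, _⟩ | ⟨he, _⟩ <;> rw [he] at h1 <;> linarith
        -- N vc ≤ κ t, N vu ≤ κ t
        have hvc_bound : N vc ≤ κ * t := by
          have h1 : N (α vc) = N vc := hiso vc hvc
          have h2 : α vc = wc - Rc := by rw [hwc_eq]; abel
          have h3 : N (wc - Rc) ≤ max (N wc) (N Rc) := hN.sub_le _ _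
          have h4 : N wc ≤ κ * t := le_trans hwc2 (by nlinarith)
          have h5 : N Rc ≤ κ * t := le_trans hRcomp.2.1 (le_trans hRv (by nlinarith))
          rw [← h1, h2]
          rcases max_cases (N wc) (N Rc) with ⟨he, _⟩ | ⟨he, _⟩ <;> rw [he] at h3 <;> linarith
        have hvu_bound : N vu ≤ κ * t := by
          have h1 : B * N vu ≤ N (α vu) := hBu vu hvu
          have h2 : α vu = wu - Ru := by rw [hwu_eq]; abel
          have h3 : N (wu - Ru) ≤ max (N wu) (N Ru) := hN.sub_le _ _
          have h4 : N wu ≤ κ * t := le_trans hwu2 (by nlinarith)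
          have h5 : N Ru ≤ κ * t := le_trans hRcomp.2.2 (le_trans hRv (by nlinarith))
          have h6 : B * N vu ≤ κ * t := by
            rw [h2] at h1
            rcases max_cases (N wu) (N Ru) with ⟨he, _⟩ | ⟨he, _⟩ <;> rw [he] at h3 <;> linarith
          nlinarith [hN.1 vu]
        -- the stable component dominates
        have hvs_eq_t : N vs = t := by
          have hm2 : max (N vc) (N vu) ≤ κ * t := max_le hvc_bound hvu_bound
          have hκt : κ * t < t := by nlinarith
          by_contra hne
          have h7 : N vs < t := lt_of_le_of_ne hvs_le hne
          have h8 : t < t := by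
            calc t = max (N vs) (max (N vc) (N vu)) := ht_max
              _ < t := max_lt h7 (lt_of_le_of_lt hm2 hκt)
          exact lt_irrefl _ h8
        refine ⟨vs, hvs, vc, hvc, vu, hvu, hvdec, by rw [hvs_eq_t]; exact hvc_bound,
          by rw [hvs_eq_t]; exact hvu_bound, ?_⟩
        calc N s ≤ κ ^ n * N ws := hwn
          _ ≤ κ ^ n * (κ * t) :=
            mul_le_mul_of_nonneg_left hws_bound (by positivity)
          _ = κ ^ (n + 1) * N vs := by rw [hvs_eq_t]; ring
    -- contradiction
    obtain ⟨n, hn⟩ := exists_pow_lt_of_lt_one (show (0:ℝ) < N s / r by positivity) hκ1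
    obtain ⟨vs, hvs, vc, hvc, vu, hvu, hvdec, _, _, hns⟩ := hinv n
    have h1 : N vs ≤ N (X n - p) := by
      rw [hvdec, hmax vs hvs vc hvc vu hvu]; exact le_max_left _ _
    have h2 : N (X n - p) ≤ r := hQr _ (hXQ n)
    have hκn : (0:ℝ) < κ ^ n := by positivity
    rw [lt_div_iff₀ hr0] at hn
    have h3 := mul_le_mul_of_nonneg_left (h1.trans h2) hκn.le
    linarith
  -- **Eu = ⊥** : forward orbits of unstable points blow up
  · rw [Submodule.eq_bot_iff]
    intro u₀ hu₀
    by_contra hu₀ne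
    obtain ⟨u, hune, huδ, k, rfl⟩ := hscale u₀ hu₀ne
    set u := k • u₀ with hudef
    have huEu : u ∈ Eu := Submodule.smul_mem _ _ hu₀
    have hNu : 0 < N u := hN.pos hune
    have hx₀ : p + u ∈ Q := hδQ (by rw [Metric.mem_ball, dist_eq_norm]; simpa using huδ)
    set X : ℕ → E := fun n => f^[n] (p + u) with hXdef
    have hX0 : X 0 = p + u := rfl
    have hXsucc : ∀ n, X (n + 1) = f (X n) := fun n => Function.iterate_succ_apply' f n (p + u)
    have hXQ : ∀ n, X n ∈ Q := by
      intro n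
      induction n with
      | zero => exact hx₀
      | succ n ih =>
        rw [hXsucc, ← hQf]
        exact Set.mem_image_of_mem f ih
    have hinv : ∀ n, ∃ vs ∈ Es, ∃ vc ∈ Ec, ∃ vu ∈ Eu, X n - p = vs + vc + vu ∧
        N vs < N vu ∧ N vc < N vu ∧ B ^ n * N u ≤ N vu := by
      intro n
      induction n with
      | zero =>
        refine ⟨0, zero_mem _, 0, zero_mem _, u, huEu, by rw [hX0]; abel, ?_, ?_, by simp⟩
        · rw [hN.zero]; exact hNu
        · rw [hN.zero]; exact hNu
      | succ n ih =>
        obtain ⟨vs, hvs, vc, hvc, vu, hvu, hvdec, h1, h2, h3⟩ := ih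
        have hwr : N (X n - p) ≤ r := hQr _ (hXQ n)
        have htmax : N (X n - p) = N vu := by
          rw [hvdec, hmax vs hvs vc hvc vu hvu, max_eq_right h2.le, max_eq_right h1.le]
        have ht0 : 0 < N vu := lt_of_lt_of_le (by positivity) h3
        have hvur : N vu ≤ r := htmax ▸ hwr
        set R := f (X n) - p - α (X n - p) with hRdef
        have hRb : N R ≤ C₂ * N (X n - p) * N (X n - p) := hR _ hwr
        rw [htmax] at hRb
        obtain ⟨Rs, hRs, Rc, hRc, Ru, hRu, hRdec⟩ := hdecomp R
        have hRcomp : N Rs ≤ N R ∧ N Rc ≤ N R ∧ N Ru ≤ N R := by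
          have := hmax Rs hRs Rc hRc Ru hRu
          rw [← hRdec] at this
          exact ⟨by rw [this]; exact le_max_left _ _,
            by rw [this]; exact le_max_of_le_right (le_max_left _ _),
            by rw [this]; exact le_max_of_le_right (le_max_right _ _)⟩
        have hRt : N R ≤ C₂ * r * N vu := by
          have h9 := mul_le_mul_of_nonneg_right
            (mul_le_mul_of_nonneg_left hvur hC₂0.le) ht0.le
          linarith
        have hRhalf : N R ≤ (1 / 2) * N vu := by
          have h9 := mul_le_mul_of_nonneg_right hrC₂ ht0.le
          linarith
        have hnext : X (n + 1) - p = (α vs + Rs) + (α vc + Rc) + (α vu + Ru) := by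
          rw [hXsucc n]
          have h5 : f (X n) - p = α (X n - p) + R := by rw [hRdef]; abel
          rw [h5, hvdec, hRdec]
          simp only [map_add]
          abel
        have hBt : B * N vu ≤ N (α vu) := hBu vu hvu
        have huu : N (α vu + Ru) = N (α vu) := by
          apply hN.add_eq_left
          have hq1 : N Ru ≤ (1 / 2) * N vu := le_trans hRcomp.2.2 hRhalf
          have hq2 : (1 / 2 : ℝ) * N vu < B * N vu :=
            mul_lt_mul_of_pos_right (by linarith) ht0
          linarith
        have huu2 : B * N vu ≤ N (α vu + Ru) := by rw [huu]; exact hBt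
        have hss : N (α vs + Rs) < B * N vu := by
          have ha : N (α vs) ≤ b' * N vs := hbs' vs hvs
          have hb1 : b' * N vs < B * N vu := by
            have t1 : b' * N vs ≤ b' * N vu := mul_le_mul_of_nonneg_left h1.le hb'0
            have t2 : b' * N vu < B * N vu := mul_lt_mul_of_pos_right (hb'1.trans hB) ht0
            linarith
          have hb2 : N Rs < B * N vu := by
            have t1 := le_trans hRcomp.1 hRhalf
            have t2 : (1 / 2 : ℝ) * N vu < B * N vu :=
              mul_lt_mul_of_pos_right (by linarith) ht0
            linarith
          have h5 : N (α vs + Rs) ≤ max (N (α vs)) (N Rs) := hN.2.2.2 _ _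
          rcases max_cases (N (α vs)) (N Rs) with ⟨he, _⟩ | ⟨he, _⟩ <;> rw [he] at h5 <;> linarith
        have hcc : N (α vc + Rc) < B * N vu := by
          have ha : N (α vc) = N vc := hiso vc hvc
          have hb1 : N vc < B * N vu := by
            have t1 : N vu ≤ B * N vu := le_mul_of_one_le_left ht0.le hB.le
            linarith
          have hb2 : N Rc < B * N vu := by
            have t1 := le_trans hRcomp.2.1 hRhalf
            have t2 : (1 / 2 : ℝ) * N vu < B * N vu :=
              mul_lt_mul_of_pos_right (by linarith) ht0
            linarith
          have h5 : N (α vc + Rc) ≤ max (N (α vc)) (N Rc) := hN.2.2.2 _ _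
          rw [ha] at h5
          rcases max_cases (N vc) (N Rc) with ⟨he, _⟩ | ⟨he, _⟩ <;> rw [he] at h5 <;> linarith
        refine ⟨α vs + Rs, add_mem (hEs vs hvs) hRs, α vc + Rc, add_mem (hEc vc hvc) hRc,
          α vu + Ru, add_mem (hEu vu hvu) hRu, hnext, ?_, ?_, ?_⟩
        · exact lt_of_lt_of_le hss huu2
        · exact lt_of_lt_of_le hcc huu2
        · calc B ^ (n + 1) * N u = B * (B ^ n * N u) := by ring
            _ ≤ B * N vu := mul_le_mul_of_nonneg_left h3 (by linarith)
            _ ≤ N (α vu + Ru) := huu2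
    obtain ⟨n, hn⟩ := pow_unbounded_of_one_lt (r / N u) hB
    obtain ⟨vs, hvs, vc, hvc, vu, hvu, hvdec, _, _, h3⟩ := hinv n
    have h1 : N vu ≤ N (X n - p) := by
      rw [hvdec, hmax vs hvs vc hvc vu hvu]
      exact le_max_of_le_right (le_max_right _ _)
    have h2 : N (X n - p) ≤ r := hQr _ (hXQ n)
    rw [div_lt_iff₀ hNu] at hn
    linarith


/-- For an analytic map `f` on an open subset of an ultrametric Banach
space, with fixed point `p` whose differential `α = f'(p)` is a bicontinuous automorphism:
`E` has a centre subspace (with `a = 1`) for `α` and every neighbourhood of `p` contains a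
neighbourhood `Q` of `p` with `f(Q) = Q`, if and only if `α` is an isometry for some
ultrametric norm defining the topology of `E`. -/
theorem centre_subspace_and_stable_nbhds_iff_isometry
    {K : Type*} [NontriviallyNormedField K] [IsUltrametricDist K] [CompleteSpace K]
    {E : Type*} [NormedAddCommGroup E] [NormedSpace K E] [IsUltrametricDist E]
    [CompleteSpace E]
    {U : Set E} (hU : IsOpen U) {f : E → E} (hf : AnalyticOnNhd K f U)
    {p : E} (hp : p ∈ U) (hfp : f p = p)
    (α : E ≃L[K] E) (hα : HasFDerivAt f (α : E →L[K] E) p) :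
    ((∃ (Es Ec Eu : Submodule K E) (N : E → ℝ),
        (∀ x ∈ Es, α x ∈ Es) ∧ (∀ x ∈ Ec, α x ∈ Ec) ∧ (∀ x ∈ Eu, α x ∈ Eu) ∧
        Disjoint Es (Ec ⊔ Eu) ∧ Disjoint Ec Eu ∧ Es ⊔ Ec ⊔ Eu = ⊤ ∧
        Set.BijOn ⇑α (Eu : Set E) (Eu : Set E) ∧
        IsUltraNorm K N ∧ DefinesTopology N ∧
        (∀ x ∈ Es, ∀ y ∈ Ec, ∀ z ∈ Eu, N (x + y + z) = max (N x) (max (N y) (N z))) ∧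
        (∀ y ∈ Ec, N (α y) = N y) ∧
        (∃ b, b < 1 ∧ ∀ x ∈ Es, N (α x) ≤ b * N x) ∧
        (∃ b, 1 < b ∧ ∀ z ∈ Eu, b * N z ≤ N (α z))) ∧
      (∀ P, P ⊆ U → P ∈ 𝓝 p → ∃ Q, Q ⊆ P ∧ Q ∈ 𝓝 p ∧ f '' Q = Q))
    ↔ ∃ N : E → ℝ, IsUltraNorm K N ∧ DefinesTopology N ∧ ∀ x : E, N (α x) = N x := by
  constructor
  · rintro ⟨⟨Es, Ec, Eu, N, hEs, hEc, hEu, hdisj1, hdisj2, hsup, hbij, hN, hNd, hmax, hiso,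
      ⟨b, hb, hbs⟩, ⟨B, hB, hBu⟩⟩, hstab⟩
    obtain ⟨cn, hcn, Cn, hCn, hNword⟩ := hNd
    obtain ⟨hEsbot, hEubot⟩ := trivial_hyperbolic hU hf hp hfp α hα hEs hEc hEu hdisj1 hdisj2
      hsup hN hcn hCn hNword hmax hiso hb hbs hB hBu hstab
    have hEcTop : Ec = ⊤ := by
      rw [hEsbot, hEubot] at hsup
      simpa using hsup
    exact ⟨N, hN, ⟨cn, hcn, Cn, hCn, hNword⟩,
      fun x => hiso x (hEcTop ▸ Submodule.mem_top)⟩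
  · rintro ⟨N, hN, hNd, hNiso⟩
    obtain ⟨cn, hcn, Cn, hCn, hNword⟩ := hNd
    constructor
    · refine ⟨⊥, ⊤, ⊥, N, ?_, ?_, ?_, disjoint_bot_left, disjoint_bot_right, by simp, ?_,
        hN, ⟨cn, hcn, Cn, hCn, hNword⟩, ?_, fun y _ => hNiso y, ?_, ?_⟩
      · intro x hx
        rw [Submodule.mem_bot] at hx ⊢
        rw [hx]; exact map_zero α
      · intro x _; trivial
      · intro x hx
        rw [Submodule.mem_bot] at hx ⊢
        rw [hx]; exact map_zero α
      · rw [Submodule.bot_coe]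
        refine ⟨fun x hx => ?_, Set.subsingleton_singleton.injOn _, fun x hx => ?_⟩
        · rw [Set.mem_singleton_iff] at hx ⊢
          rw [hx]; exact map_zero α
        · rw [Set.mem_singleton_iff] at hx
          exact ⟨0, rfl, by rw [hx]; exact map_zero α⟩
      · intro x hx y _ z hz
        rw [Submodule.mem_bot] at hx hz
        subst hx; subst hz
        rw [zero_add, add_zero, hN.zero, max_eq_left (hN.1 y), max_eq_right (hN.1 y)]
      · refine ⟨0, one_pos, fun x hx => ?_⟩
        rw [Submodule.mem_bot] at hx
        subst hx
        rw [map_zero, hN.zero, zero_mul]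
      · refine ⟨2, one_lt_two, fun z hz => ?_⟩
        rw [Submodule.mem_bot] at hz
        subst hz
        rw [map_zero, hN.zero, mul_zero]
    · exact stable_nbhds hU hf hp hfp α hα hN hcn hCn hNword hNiso
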